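/- Let H be an Abelian Polish group, N < ω, V₀,…,V_{N-1} ⊆ H disjoint open sets, and bᵢ ∈ Vᵢ. Then there exist open sets Wᵢ with bᵢ ∈ Wᵢ ⊆ Vᵢ for i < N such that {Wᵢ : i < N} is immersed in {Vᵢ : i < N}: i.e. there is a bijection π from the W's to the V's with W ⊆ π(W), and whenever a,a' ∈ W₀ and b ∈ W₁ (for any W₀,W₁ in the family), (a−a')+b ∈ π(W₁). -/

import Mathlib

theorem exists_immersed_shrinking {H : Type*} [AddCommGroup H]
    [TopologicalSpace H] [IsTopologicalAddGroup H] [PolishSpace H]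
    (N : ℕ) (V : Fin N → Set H) (b : Fin N → H)
    (hVo : ∀ i, IsOpen (V i)) (hdisj : Pairwise (Function.onFun Disjoint V))
    (hb : ∀ i, b i ∈ V i) :
    ∃ W : Fin N → Set H,
      (∀ i, IsOpen (W i)) ∧ (∀ i, b i ∈ W i) ∧ (∀ i, W i ⊆ V i) ∧
      ∀ i j : Fin N, ∀ a ∈ W i, ∀ a' ∈ W i, ∀ c ∈ W j, (a - a') + c ∈ V j := by
  have hf : Continuous (fun p : H × H × H => p.1 - p.2.1 + p.2.2) := by fun_prop
  have key : ∀ j : Fin N, ∃ U₀ U₁ T : Set H, IsOpen U₀ ∧ (0 : H) ∈ U₀ ∧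
      IsOpen U₁ ∧ (0 : H) ∈ U₁ ∧ IsOpen T ∧ b j ∈ T ∧
      ∀ x ∈ U₀, ∀ y ∈ U₁, ∀ z ∈ T, x - y + z ∈ V j := by
    intro j
    have hmem : ((fun p : H × H × H => p.1 - p.2.1 + p.2.2) ⁻¹' V j) ∈
        nhds ((0 : H), ((0 : H), b j)) := by
      refine ((hVo j).preimage hf).mem_nhds ?_
      simp [hb j]
    rw [mem_nhds_prod_iff'] at hmem
    obtain ⟨U₀, v, hU₀o, hU₀, hvo, hvm, hsub⟩ := hmem
    have hv : v ∈ nhds ((0 : H), b j) := hvo.mem_nhds hvm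
    rw [mem_nhds_prod_iff'] at hv
    obtain ⟨U₁, T, hU₁o, hU₁, hTo, hTm, hsub'⟩ := hv
    exact ⟨U₀, U₁, T, hU₀o, hU₀, hU₁o, hU₁, hTo, hTm, fun x hx y hy z hz =>
      hsub (a := (x, y, z)) ⟨hx, hsub' ⟨hy, hz⟩⟩⟩
  choose U₀ U₁ T hU₀o hU₀ hU₁o hU₁ hTo hT hkey using key
  set U : Set H := ⋂ j, U₀ j ∩ U₁ j with hU
  have hUo : IsOpen U := isOpen_iInter_of_finite fun j => (hU₀o j).inter (hU₁o j)
  have hU0 : (0 : H) ∈ U := Set.mem_iInter.2 fun j => ⟨hU₀ j, hU₁ j⟩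
  refine ⟨fun i => ((· - b i) ⁻¹' U) ∩ T i ∩ V i, ?_, ?_, ?_, ?_⟩
  · intro i
    exact ((hUo.preimage (by fun_prop)).inter (hTo i)).inter (hVo i)
  · intro i
    exact ⟨⟨by simp [hU0], hT i⟩, hb i⟩
  · intro i x hx
    exact hx.2
  · rintro i j a ⟨⟨ha, -⟩, -⟩ a' ⟨⟨ha', -⟩, -⟩ c ⟨⟨-, hc⟩, -⟩
    have h1 : a - b i ∈ U₀ j := (Set.mem_iInter.1 ha j).1
    have h2 : a' - b i ∈ U₁ j := (Set.mem_iInter.1 ha' j).2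
    have := hkey j _ h1 _ h2 _ hc
    have heq : (a - b i) - (a' - b i) + c = (a - a') + c := by abel
    rwa [heq] at this
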